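/- arXiv:1410.7504 — 5 statements merged into one kernel-verified Lean document; each statement's English description precedes it below -/
import Mathlib

section
/- Let B be an n×m integer matrix with injective associated map ℤᵐ → ℤⁿ, such that the image of ℕᵐ under B equals ker A ∩ ℕⁿ for some integer matrix A (the Hilbert basis situation). Then the rational cone σ = {v ∈ ℚᵐ : Bv ∈ ℚ₊ⁿ} equals ℚ₊ᵐ. -/
/-- If `B : ℤᵐ → ℤⁿ` is injective with columns in `ℕⁿ` and `B(ℕᵐ) = ker A ∩ ℕⁿ`,
then the rational cone `σ = {v ∈ ℚᵐ : Bv ∈ ℚ₊ⁿ}` equals the nonnegative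
orthant `ℚ₊ᵐ`. -/
theorem stmt_9 (k n m : ℕ)
    (A : Matrix (Fin k) (Fin n) ℤ) (B : Matrix (Fin n) (Fin m) ℤ)
    (hnonneg : ∀ i j, 0 ≤ B i j)
    (hinj : Function.Injective B.mulVec)
    (himg : ∀ u : Fin n → ℤ,
      (A.mulVec u = 0 ∧ ∀ i, 0 ≤ u i) ↔
        ∃ w : Fin m → ℤ, (∀ i, 0 ≤ w i) ∧ B.mulVec w = u) :
    {v : Fin m → ℚ | ∀ j, 0 ≤ (B.map (Int.cast : ℤ → ℚ)).mulVec v j} =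
      {v : Fin m → ℚ | ∀ i, 0 ≤ v i} := by
  -- A kills the image of B
  have hAB : ∀ z : Fin m → ℤ, A.mulVec (B.mulVec z) = 0 := by
    intro z
    have key : ∀ w : Fin m → ℤ, (∀ i, 0 ≤ w i) → A.mulVec (B.mulVec w) = 0 := by
      intro w hw
      exact ((himg (B.mulVec w)).mpr ⟨w, hw, rfl⟩).1
    have hz : z = (fun i => max (z i) 0) - (fun i => max (-z i) 0) := by
      funext i
      simp only [Pi.sub_apply]
      omega
    rw [hz, Matrix.mulVec_sub, Matrix.mulVec_sub,
      key _ (fun i => le_max_right _ _), key _ (fun i => le_max_right _ _), sub_zero]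
  ext v
  simp only [Set.mem_setOf_eq]
  constructor
  · intro h
    -- clear denominators
    set d : ℕ := ∏ i, (v i).den with hd
    have hdpos : 0 < d := Finset.prod_pos (fun i _ => (v i).pos)
    have hden : ∀ i : Fin m, ((v i).den : ℤ) ∣ (d : ℤ) := by
      intro i
      exact_mod_cast Int.natCast_dvd_natCast.mpr (Finset.dvd_prod_of_mem _ (Finset.mem_univ i))
    set z : Fin m → ℤ := fun i => (v i).num * ((d : ℤ) / (v i).den) with hz
    have hzv : ∀ i, (z i : ℚ) = (d : ℚ) * v i := by
      intro i
      have h1 : ((v i).den : ℤ) * ((d : ℤ) / (v i).den) = d :=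
        Int.mul_ediv_cancel' (hden i)
      have h2 : (v i : ℚ) * (v i).den = (v i).num := Rat.mul_den_eq_num (v i)
      have h3 : ((d : ℤ) : ℚ) = ((v i).den : ℚ) * (((d : ℤ) / (v i).den : ℤ) : ℚ) := by
        exact_mod_cast congrArg (Int.cast : ℤ → ℚ) h1.symm
      show (((v i).num * ((d : ℤ) / (v i).den) : ℤ) : ℚ) = (d : ℚ) * v i
      push_cast
      push_cast at h3
      calc ((v i).num : ℚ) * (((d : ℤ) / (v i).den : ℤ) : ℚ)
          = (((d : ℤ) / (v i).den : ℤ) : ℚ) * ((v i : ℚ) * (v i).den) := by rw [h2]; ring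
        _ = ((v i).den : ℚ) * (((d : ℤ) / (v i).den : ℤ) : ℚ) * v i := by ring
        _ = (d : ℚ) * v i := by rw [← h3]
    -- B z is nonnegative
    have hBz : ∀ j, 0 ≤ B.mulVec z j := by
      intro j
      have hcast : ((B.mulVec z j : ℤ) : ℚ) =
          ((B.map (Int.cast : ℤ → ℚ)).mulVec (fun i => (z i : ℚ)) j) :=
        RingHom.map_mulVec (Int.castRingHom ℚ) B z j
      have heq : (fun i => ((z i : ℤ) : ℚ)) = (d : ℚ) • v := by
        funext i
        simp [hzv i]
      rw [heq, Matrix.mulVec_smul] at hcast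
      have hnn : (0 : ℚ) ≤ ((B.mulVec z j : ℤ) : ℚ) := by
        rw [hcast]
        simp only [Pi.smul_apply, smul_eq_mul]
        exact mul_nonneg (by positivity) (h j)
      exact_mod_cast hnn
    obtain ⟨w, hw, hweq⟩ := (himg (B.mulVec z)).mp ⟨hAB z, hBz⟩
    have hwz : w = z := hinj hweq
    intro i
    have hzi : 0 ≤ z i := hwz ▸ hw i
    have hnn : (0 : ℚ) ≤ (d : ℚ) * v i := by
      rw [← hzv i]; exact_mod_cast hzi
    have hdq : (0 : ℚ) < d := by exact_mod_cast hdpos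
    exact nonneg_of_mul_nonneg_right hnn hdq
  · intro h j
    simp only [Matrix.mulVec, dotProduct, Matrix.map_apply]
    apply Finset.sum_nonneg
    intro i _
    exact mul_nonneg (by exact_mod_cast hnonneg j i) (h i)
end

section
/- Let A be a k×n integer matrix and suppose ker A ∩ ℕⁿ contains a vector with all entries strictly positive. Let B be the n×m matrix whose columns form the Hilbert basis of ker A ∩ ℕⁿ. Then ker A = B(ℤᵐ) as subgroups of ℤⁿ, i.e., the image of B over ℤ equals the full kernel of A. -/
/-- If `ker A ∩ ℕⁿ` contains a strictly positive vector and `B(ℕᵐ) = ker A ∩ ℕⁿ`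
(the Hilbert basis situation), then `B(ℤᵐ) = ker A` as subgroups of `ℤⁿ`. -/
theorem stmt_10 (k n m : ℕ)
    (A : Matrix (Fin k) (Fin n) ℤ) (B : Matrix (Fin n) (Fin m) ℤ)
    (hpos : ∃ u : Fin n → ℤ, A.mulVec u = 0 ∧ ∀ i, 0 < u i)
    (hgen : ∀ u : Fin n → ℤ,
      (A.mulVec u = 0 ∧ ∀ i, 0 ≤ u i) ↔
        ∃ w : Fin m → ℤ, (∀ i, 0 ≤ w i) ∧ B.mulVec w = u) :
    ∀ u : Fin n → ℤ, A.mulVec u = 0 ↔ ∃ w : Fin m → ℤ, B.mulVec w = u := by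
  obtain ⟨p, hp0, hppos⟩ := hpos
  intro u
  constructor
  · intro hu
    -- choose N large enough
    set N : ℤ := ∑ i, ((u i).natAbs : ℤ) with hN
    have hN0 : 0 ≤ N := Finset.sum_nonneg (fun i _ => by positivity)
    have hNbig : ∀ i, (u i).natAbs ≤ N := fun i =>
      Finset.single_le_sum (f := fun i => ((u i).natAbs : ℤ))
        (fun i _ => by positivity) (Finset.mem_univ i)
    have hnn : ∀ i, 0 ≤ u i + N * p i := by
      intro i
      have h1 : 1 ≤ p i := hppos i
      have : N ≤ N * p i := le_mul_of_one_le_right hN0 h1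
      have habs : -u i ≤ N := by
        have h2 : |u i| = ((u i).natAbs : ℤ) := Int.abs_eq_natAbs _
        have := hNbig i
        have := neg_le_abs (u i)
        linarith
      linarith
    have hker : A.mulVec (u + N • p) = 0 := by
      rw [Matrix.mulVec_add, Matrix.mulVec_smul, hu, hp0]
      simp
    have hker' : A.mulVec (N • p) = 0 := by
      rw [Matrix.mulVec_smul, hp0]; simp
    obtain ⟨w, hw0, hw⟩ := (hgen (u + N • p)).mp ⟨hker, fun i => by simpa using hnn i⟩
    obtain ⟨w', hw'0, hw'⟩ := (hgen (N • p)).mp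
      ⟨hker', fun i => mul_nonneg hN0 (le_of_lt (hppos i))⟩
    refine ⟨w - w', ?_⟩
    rw [Matrix.mulVec_sub, hw, hw']
    abel
  · rintro ⟨w, rfl⟩
    -- split w into positive and negative parts
    set wp : Fin m → ℤ := fun i => max (w i) 0 with hwp
    set wm : Fin m → ℤ := fun i => max (-w i) 0 with hwm
    have hsplit : w = wp - wm := by
      funext i
      simp only [hwp, hwm, Pi.sub_apply]
      rcases le_total (w i) 0 with h | h
      · rw [max_eq_right h, max_eq_left (by linarith)]; ring
      · rw [max_eq_left h, max_eq_right (by linarith)]; ring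
    have hp' : A.mulVec (B.mulVec wp) = 0 := by
      obtain ⟨hk, _⟩ := (hgen (B.mulVec wp)).mpr ⟨wp, fun i => le_max_right _ _, rfl⟩
      exact hk
    have hm' : A.mulVec (B.mulVec wm) = 0 := by
      obtain ⟨hk, _⟩ := (hgen (B.mulVec wm)).mpr ⟨wm, fun i => le_max_right _ _, rfl⟩
      exact hk
    rw [hsplit, Matrix.mulVec_sub, Matrix.mulVec_sub, hp', hm']
    simp
end

section
/- Let Y ⊆ ℂⁿ be the zero set of binomials x^{ℓ⁺} − x^{ℓ⁻} for ℓ in a subgroup Λ of ℤⁿ, and suppose 0 ∈ Y, equivalently ker A contains a strictly positive integer vector v = (v₁,…,vₙ) (where the rows of A generate Λ). Then the map H : Y × [0,1] → ℂⁿ, (y,t) ↦ (t^{v₁}y₁, …, t^{vₙ}yₙ) maps into Y, is continuous, satisfies H(y,1) = y and H(y,0) = 0; hence Y is contractible. -/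
open scoped unitInterval

/-- Let `Y ⊆ ℂⁿ` be the zero set of the binomials `x^{ℓ⁺} - x^{ℓ⁻}`, `ℓ ∈ Λ`,
and suppose there is a strictly positive integer vector `v` orthogonal to `Λ`
(equivalently `0 ∈ Y`).  Then the scaling homotopy
`H(y,t) = (t^{v₁}y₁, …, t^{vₙ}yₙ)` maps into `Y`, is continuous, satisfies
`H(y,1) = y` and `H(y,0) = 0`; hence `Y` is contractible. -/
theorem stmt_11 (n : ℕ) (Λ : AddSubgroup (Fin n → ℤ))
    (Y : Set (Fin n → ℂ))
    (hY : Y = {y | ∀ ℓ ∈ Λ,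
      (∏ i, y i ^ (ℓ i).toNat) = ∏ i, y i ^ (-(ℓ i)).toNat})
    (v : Fin n → ℤ) (hvpos : ∀ i, 0 < v i)
    (hv : ∀ ℓ ∈ Λ, (∑ i, ℓ i * v i) = 0) :
    (∀ (y : Fin n → ℂ), y ∈ Y → ∀ t : ℂ,
        (fun i => t ^ (v i).toNat * y i) ∈ Y) ∧
    Continuous (fun p : Y × I =>
        fun i => (((p.2 : ℝ) : ℂ)) ^ (v i).toNat * (p.1 : Fin n → ℂ) i) ∧
    (∀ (y : Y), (fun i => (((1 : ℝ) : ℂ)) ^ (v i).toNat * (y : Fin n → ℂ) i)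
        = (y : Fin n → ℂ)) ∧
    (∀ (y : Y), (fun i => (((0 : ℝ) : ℂ)) ^ (v i).toNat * (y : Fin n → ℂ) i)
        = (0 : Fin n → ℂ)) ∧
    ContractibleSpace Y := by
  have key : ∀ (y : Fin n → ℂ), y ∈ Y → ∀ t : ℂ,
      (fun i => t ^ (v i).toNat * y i) ∈ Y := by
    intro y hy t
    rw [hY] at hy ⊢
    intro ℓ hℓ
    have hyℓ := hy ℓ hℓ
    -- equality of exponent sums
    have hsum : (∑ i, (ℓ i).toNat * (v i).toNat)
        = ∑ i, (-(ℓ i)).toNat * (v i).toNat := by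
      have hZ : (∑ i, ((ℓ i).toNat : ℤ) * v i)
          = ∑ i, ((-(ℓ i)).toNat : ℤ) * v i := by
        have h0 := hv ℓ hℓ
        have : ∑ i, ((ℓ i).toNat : ℤ) * v i - ∑ i, ((-(ℓ i)).toNat : ℤ) * v i
            = ∑ i, ℓ i * v i := by
          rw [← Finset.sum_sub_distrib]
          refine Finset.sum_congr rfl fun i _ => ?_
          rw [← sub_mul, Int.toNat_sub_toNat_neg]
        omega
      have hvn : ∀ i, ((v i).toNat : ℤ) = v i := fun i =>
        Int.toNat_of_nonneg (hvpos i).le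
      have := hZ
      zify [hvn]
      simpa [hvn] using hZ
    calc ∏ i, (t ^ (v i).toNat * y i) ^ (ℓ i).toNat
        = t ^ (∑ i, (ℓ i).toNat * (v i).toNat) * ∏ i, y i ^ (ℓ i).toNat := by
          simp [mul_pow, ← pow_mul, Finset.prod_mul_distrib,
            Finset.prod_pow_eq_pow_sum, mul_comm]
      _ = t ^ (∑ i, (-(ℓ i)).toNat * (v i).toNat) * ∏ i, y i ^ (-(ℓ i)).toNat := by
          rw [hsum, hyℓ]
      _ = ∏ i, (t ^ (v i).toNat * y i) ^ (-(ℓ i)).toNat := by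
          simp [mul_pow, ← pow_mul, Finset.prod_mul_distrib,
            Finset.prod_pow_eq_pow_sum, mul_comm]
  have hcont : Continuous (fun p : Y × I =>
      fun i => (((p.2 : ℝ) : ℂ)) ^ (v i).toNat * (p.1 : Fin n → ℂ) i) := by
    refine continuous_pi fun i => ?_
    exact ((Complex.continuous_ofReal.comp
        (continuous_subtype_val.comp continuous_snd)).pow _).mul
      ((continuous_apply i).comp (continuous_subtype_val.comp continuous_fst))
  have hone : ∀ (y : Y),
      (fun i => (((1 : ℝ) : ℂ)) ^ (v i).toNat * (y : Fin n → ℂ) i)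
        = (y : Fin n → ℂ) := by
    intro y; funext i; simp
  have hzero : ∀ (y : Y),
      (fun i => (((0 : ℝ) : ℂ)) ^ (v i).toNat * (y : Fin n → ℂ) i)
        = (0 : Fin n → ℂ) := by
    intro y; funext i
    have : (v i).toNat ≠ 0 := by
      have := hvpos i; omega
    simp [this]
  refine ⟨key, hcont, hone, hzero, ?_⟩
  -- 1 ∈ Y, hence 0 ∈ Y
  have hone_mem : (fun _ : Fin n => (1 : ℂ)) ∈ Y := by
    rw [hY]; intro ℓ hℓ; simp
  have h0Y : (0 : Fin n → ℂ) ∈ Y := by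
    have := key _ hone_mem 0
    have heq : (fun i => (0 : ℂ) ^ (v i).toNat * (fun _ : Fin n => (1:ℂ)) i)
        = (0 : Fin n → ℂ) := by
      funext i
      have : (v i).toNat ≠ 0 := by have := hvpos i; omega
      simp [this]
    rwa [heq] at this
  let F : C(I × Y, Y) :=
    ⟨fun p => ⟨fun i => (((p.1 : ℝ) : ℂ)) ^ (v i).toNat * (p.2 : Fin n → ℂ) i,
        key _ p.2.2 _⟩,
      (hcont.comp continuous_swap).subtype_mk _⟩
  have hnull : (ContinuousMap.id Y).Nullhomotopic := by
    refine ⟨⟨0, h0Y⟩, ?_⟩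
    refine (ContinuousMap.Homotopic.symm ?_)
    exact ⟨{ toContinuousMap := F,
             map_zero_left := fun y => Subtype.ext (by simpa [F] using hzero y),
             map_one_left := fun y => Subtype.ext (by simp [F, hone y]) }⟩
  exact (contractible_iff_id_nullhomotopic Y).mpr hnull
end

section
/- Let B be an injective n×m integer matrix with rows spanning a subsemigroup of ℤᵐ whose saturation is ℕᵐ (so each i has a row Nᵢeᵢ of B with Nᵢ ≥ 1). Then the monomial map φ : ℂᵐ → ℂⁿ, φ(t)ⱼ = ∏ᵢ tᵢ^{bⱼᵢ} (with the convention 0⁰ = 1), is a proper and finite map; in particular, the coordinate functions include tᵢ^{Nᵢ} for each i, so ‖φ(t)‖ → ∞ as ‖t‖ → ∞. -/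
/-- If the monomial map `φ : ℂᵐ → ℂⁿ`, `φ(t)ⱼ = ∏ᵢ tᵢ^{bⱼᵢ}` (entries of `B`
in `ℕ`), has among its components `tᵢ^{Nᵢ}` with `Nᵢ ≥ 1` for each `i`
(i.e. for each `i` some row of `B` is `Nᵢ eᵢ`), then `φ` is proper and has
finite fibers. -/
theorem stmt_15 (n m : ℕ) (B : Matrix (Fin n) (Fin m) ℤ)
    (hnonneg : ∀ j i, 0 ≤ B j i)
    (hrows : ∀ i : Fin m, ∃ (j : Fin n) (N : ℤ), 1 ≤ N ∧
      (fun i' => B j i') = Pi.single i N)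
    (φ : (Fin m → ℂ) → (Fin n → ℂ))
    (hφ : ∀ t j, φ t j = ∏ i, t i ^ (B j i).toNat) :
    IsProperMap φ ∧ ∀ y : Fin n → ℂ, (φ ⁻¹' {y}).Finite := by
  have key : ∀ i : Fin m, ∃ (j : Fin n) (N : ℕ), 1 ≤ N ∧ ∀ t, φ t j = t i ^ N := by
    intro i
    obtain ⟨j, N, hN1, hrow⟩ := hrows i
    refine ⟨j, N.toNat, by omega, fun t => ?_⟩
    rw [hφ, Finset.prod_eq_single i]
    · rw [show B j i = N from by simpa using congrFun hrow i]
    · intro b _ hb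
      have : B j b = 0 := by simpa [Pi.single_apply, hb] using congrFun hrow b
      simp [this]
    · simp
  choose jf Nf hNf hkey using key
  have hcφ : Continuous φ := by
    have : φ = fun t j => ∏ i, t i ^ (B j i).toNat := by
      funext t j; exact hφ t j
    rw [this]
    exact continuous_pi fun j => continuous_finset_prod _ fun i _ => (continuous_apply i).pow _
  constructor
  · rw [isProperMap_iff_isCompact_preimage]
    refine ⟨hcφ, fun K hK => ?_⟩
    obtain ⟨C, hC⟩ := hK.isBounded.subset_closedBall 0
    refine IsCompact.of_isClosed_subset (isCompact_closedBall (0 : Fin m → ℂ) (max 1 C))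
      (hK.isClosed.preimage hcφ) ?_
    intro t ht
    rw [Metric.mem_closedBall, dist_zero_right,
      pi_norm_le_iff_of_nonneg (le_trans zero_le_one (le_max_left 1 C))]
    intro i
    have h1 : ‖φ t (jf i)‖ ≤ C := by
      have h2 := hC ht
      rw [Metric.mem_closedBall, dist_zero_right] at h2
      exact (norm_le_pi_norm (φ t) (jf i)).trans h2
    rw [hkey i t, norm_pow] at h1
    by_contra hlt
    push_neg at hlt
    have h2 : (1:ℝ) ≤ ‖t i‖ := le_of_lt (lt_of_le_of_lt (le_max_left 1 C) hlt)
    have h3 : ‖t i‖ ≤ ‖t i‖ ^ Nf i := le_self_pow₀ h2 (by have := hNf i; omega)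
    have h4 : C < ‖t i‖ ^ Nf i := lt_of_lt_of_le (lt_of_le_of_lt (le_max_right 1 C) hlt) h3
    linarith
  · intro y
    have hsub : φ ⁻¹' {y} ⊆ Set.pi Set.univ (fun i => {z : ℂ | z ^ Nf i = y (jf i)}) := by
      intro t ht i _
      have hty : φ t = y := ht
      simp only [Set.mem_setOf_eq, ← hty]
      exact (hkey i t).symm
    refine Set.Finite.subset (Set.Finite.pi fun i => ?_) hsub
    have hp : (Polynomial.X ^ Nf i - Polynomial.C (y (jf i)) : Polynomial ℂ) ≠ 0 :=
      Polynomial.X_pow_sub_C_ne_zero (by have := hNf i; omega) _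
    have hfin := Polynomial.finite_setOf_isRoot hp
    refine hfin.subset fun z hz => ?_
    simp only [Set.mem_setOf_eq] at hz ⊢
    simp [Polynomial.IsRoot, sub_eq_zero, hz]
end

section
/- Let S be the domain {z ∈ ℂ² : 3/4 < |z₁| < 5/4 and 3/4 < |z₂| < 5/4} (a product of two annuli) and for ε with −1/2 < ε < 1/2 let D_ε = {z ∈ S : z₁ − z₂ = 1 + ε}. Then D_ε is the disjoint union of the two nonempty relatively open-and-closed subsets D_ε⁺ = {z ∈ D_ε : Im z₁ > 0} and D_ε⁻ = {z ∈ D_ε : Im z₁ < 0}; in particular no point of D_ε has Im z₁ = 0. -/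
open Complex

/-- Let `S` be the product of two annuli
`{z ∈ ℂ² : 3/4 < |z₁| < 5/4, 3/4 < |z₂| < 5/4}` and, for `-1/2 < ε < 1/2`,
let `Dε = {z ∈ S : z₁ - z₂ = 1 + ε}`.  Then `Dε` splits as the disjoint
union of the nonempty relatively clopen subsets `Dε⁺ = {Im z₁ > 0}` and
`Dε⁻ = {Im z₁ < 0}`; in particular no point of `Dε` has `Im z₁ = 0`. -/
theorem stmt_19 (ε : ℝ) (hε : -(1/2 : ℝ) < ε ∧ ε < 1/2)
    (S : Set (ℂ × ℂ))
    (hS : S = {z : ℂ × ℂ | (3/4 < ‖z.1‖ ∧ ‖z.1‖ < 5/4) ∧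
      (3/4 < ‖z.2‖ ∧ ‖z.2‖ < 5/4)})
    (D : Set (ℂ × ℂ))
    (hD : D = {z ∈ S | z.1 - z.2 = 1 + (ε : ℂ)}) :
    (∀ z ∈ D, z.1.im ≠ 0) ∧
    ({z ∈ D | 0 < z.1.im} ∪ {z ∈ D | z.1.im < 0} = D) ∧
    Disjoint {z ∈ D | 0 < z.1.im} {z ∈ D | z.1.im < 0} ∧
    {z ∈ D | 0 < z.1.im}.Nonempty ∧ {z ∈ D | z.1.im < 0}.Nonempty ∧
    IsClopen {z : D | 0 < (z : ℂ × ℂ).1.im} ∧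
    IsClopen {z : D | (z : ℂ × ℂ).1.im < 0} := by
  obtain ⟨hε1, hε2⟩ := hε
  set c : ℝ := 1 + ε with hc
  have hc1 : 1/2 < c := by simp [hc]; linarith
  have hc2 : c < 3/2 := by simp [hc]; linarith
  -- Part 1: no point of D has Im z₁ = 0
  have h1 : ∀ z ∈ D, z.1.im ≠ 0 := by
    intro z hz him
    rw [hD] at hz
    obtain ⟨hzS, hzd⟩ := hz
    rw [hS] at hzS
    obtain ⟨⟨ha1, ha2⟩, ⟨hb1, hb2⟩⟩ := hzS
    set x : ℝ := z.1.re with hx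
    have hz1 : z.1 = (x : ℂ) := Complex.ext rfl (by simp [him])
    have hz2 : z.2 = ((x - c : ℝ) : ℂ) := by
      have : z.2 = z.1 - (1 + (ε : ℂ)) := by
        rw [← hzd]; ring
      rw [this, hz1]
      push_cast [hc]
      ring
    rw [hz1, Complex.norm_real, Real.norm_eq_abs] at ha1 ha2
    rw [hz2, Complex.norm_real, Real.norm_eq_abs] at hb1 hb2
    rcases abs_cases x with ⟨e1, e2⟩ | ⟨e1, e2⟩ <;>
      rcases abs_cases (x - c) with ⟨f1, f2⟩ | ⟨f1, f2⟩ <;>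
      rw [e1] at ha1 ha2 <;> rw [f1] at hb1 hb2 <;> linarith
  -- the explicit points
  have hy0 : (0:ℝ) < 1 - c^2/4 := by nlinarith
  set y : ℝ := Real.sqrt (1 - c^2/4) with hy
  have hypos : 0 < y := Real.sqrt_pos.mpr hy0
  have hyy : y * y = 1 - c^2/4 := Real.mul_self_sqrt (le_of_lt hy0)
  have key : ∀ s : ℝ, s * s = y * y → ((⟨c/2, s⟩ : ℂ), (⟨-(c/2), s⟩ : ℂ)) ∈ D := by
    intro s hs
    have h1a : ‖(⟨c/2, s⟩ : ℂ)‖ = 1 := by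
      rw [Complex.norm_def, Complex.normSq_mk]
      have : c/2 * (c/2) + s * s = 1 := by rw [hs, hyy]; ring
      rw [this, Real.sqrt_one]
    have h2a : ‖(⟨-(c/2), s⟩ : ℂ)‖ = 1 := by
      rw [Complex.norm_def, Complex.normSq_mk]
      have : -(c/2) * -(c/2) + s * s = 1 := by rw [hs, hyy]; ring
      rw [this, Real.sqrt_one]
    rw [hD]
    constructor
    · rw [hS]
      constructor
      · constructor <;> simp [h1a] <;> norm_num
      · constructor <;> simp [h2a] <;> norm_num
    · show (⟨c/2, s⟩ : ℂ) - ⟨-(c/2), s⟩ = 1 + (ε : ℂ)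
      apply Complex.ext <;> simp [hc] <;> ring
  have hpos : ((⟨c/2, y⟩ : ℂ), (⟨-(c/2), y⟩ : ℂ)) ∈ D := key y rfl
  have hneg : ((⟨c/2, -y⟩ : ℂ), (⟨-(c/2), -y⟩ : ℂ)) ∈ D := key (-y) (by ring)
  refine ⟨h1, ?_, ?_, ?_, ?_, ?_, ?_⟩
  · ext z
    simp only [Set.mem_union, Set.mem_setOf_eq]
    constructor
    · rintro (⟨h, _⟩ | ⟨h, _⟩) <;> exact h
    · intro hz
      rcases lt_trichotomy z.1.im 0 with h | h | h
      · exact Or.inr ⟨hz, h⟩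
      · exact absurd h (h1 z hz)
      · exact Or.inl ⟨hz, h⟩
  · rw [Set.disjoint_left]
    rintro z ⟨_, h⟩ ⟨_, h'⟩
    linarith
  · exact ⟨_, hpos, hypos⟩
  · exact ⟨_, hneg, by simpa using hypos⟩
  · have hcont : Continuous fun z : D => (z : ℂ × ℂ).1.im :=
      Complex.continuous_im.comp (continuous_fst.comp continuous_subtype_val)
    constructor
    · have : {z : D | 0 < (z : ℂ × ℂ).1.im} = {z : D | 0 ≤ (z : ℂ × ℂ).1.im} := by
        ext z
        simp only [Set.mem_setOf_eq]
        exact ⟨le_of_lt, fun h => h.lt_of_ne' (h1 z z.2)⟩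
      rw [this]
      exact isClosed_le continuous_const hcont
    · exact isOpen_lt continuous_const hcont
  · have hcont : Continuous fun z : D => (z : ℂ × ℂ).1.im :=
      Complex.continuous_im.comp (continuous_fst.comp continuous_subtype_val)
    constructor
    · have : {z : D | (z : ℂ × ℂ).1.im < 0} = {z : D | (z : ℂ × ℂ).1.im ≤ 0} := by
        ext z
        simp only [Set.mem_setOf_eq]
        exact ⟨le_of_lt, fun h => h.lt_of_ne (h1 z z.2)⟩
      rw [this]
      exact isClosed_le hcont continuous_const
    · exact isOpen_lt hcont continuous_const
end
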